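/- Let $\rho_i : 2^E \to \mathbb{R}$, $i \in N$, be submodular, monotone, normalized functions on a common finite ground set $E$, and $\rho = \sum_{i \in N} \rho_i$. Then the Minkowski sum of the polymatroid base polytopes satisfies $\sum_{i \in N} P_{\rho_i} = P_\rho$. -/

import Mathlib

open Finset Pointwise

/-- The polymatroid base polytope of `ρ`. -/
def basePolytope {E : Type*} [Fintype E] (ρ : Finset E → ℝ) : Set (E → ℝ) :=
  {x | (∀ e, 0 ≤ x e) ∧ (∀ U : Finset E, ∑ e ∈ U, x e ≤ ρ U) ∧ ∑ e, x e = ρ Finset.univ}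

namespace EdmondsSum

variable {E : Type*} [Fintype E] [DecidableEq E]

/-- The prefix set of the first `k` elements in the ordering `π`. -/
def pre (π : Fin (Fintype.card E) ≃ E) (k : ℕ) : Finset E :=
  Finset.univ.filter (fun e => ((π.symm e : Fin (Fintype.card E)) : ℕ) < k)

lemma mem_pre {π : Fin (Fintype.card E) ≃ E} {k : ℕ} {e : E} :
    e ∈ pre π k ↔ ((π.symm e : Fin (Fintype.card E)) : ℕ) < k := by
  simp [pre]

lemma pre_zero (π : Fin (Fintype.card E) ≃ E) : pre π 0 = ∅ := by
  ext e; simp [mem_pre]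

lemma pre_card (π : Fin (Fintype.card E) ≃ E) : pre π (Fintype.card E) = Finset.univ := by
  ext e; simp [mem_pre, (π.symm e).isLt]

lemma pre_mono {π : Fin (Fintype.card E) ≃ E} {k l : ℕ} (h : k ≤ l) :
    pre π k ⊆ pre π l := by
  intro e he
  rw [mem_pre] at he ⊢
  omega

lemma not_mem_pre {π : Fin (Fintype.card E) ≃ E} {k : ℕ} (hk : k < Fintype.card E) :
    π ⟨k, hk⟩ ∉ pre π k := by
  simp [mem_pre]

lemma pre_succ {π : Fin (Fintype.card E) ≃ E} {k : ℕ} (hk : k < Fintype.card E) :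
    pre π (k + 1) = insert (π ⟨k, hk⟩) (pre π k) := by
  ext e
  simp only [mem_pre, Finset.mem_insert]
  constructor
  · intro h
    rcases Nat.lt_succ_iff_lt_or_eq.mp h with h | h
    · exact Or.inr h
    · left
      have : π.symm e = ⟨k, hk⟩ := Fin.ext h
      rw [← this, Equiv.apply_symm_apply]
  · rintro (rfl | h)
    · simp
    · omega

lemma pre_succ_ge {π : Fin (Fintype.card E) ≃ E} {k : ℕ} (hk : Fintype.card E ≤ k) :
    pre π (k + 1) = pre π k := by
  ext e
  simp only [mem_pre]
  have := (π.symm e).isLt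
  omega

/-- The greedy vertex of the base polytope of `ρ` for ordering `π`. -/
def gv (ρ : Finset E → ℝ) (π : Fin (Fintype.card E) ≃ E) : E → ℝ :=
  fun e => ρ (pre π (((π.symm e : Fin (Fintype.card E)) : ℕ) + 1))
    - ρ (pre π ((π.symm e : Fin (Fintype.card E)) : ℕ))

lemma gv_apply (ρ : Finset E → ℝ) (π : Fin (Fintype.card E) ≃ E) (k : Fin (Fintype.card E)) :
    gv ρ π (π k) = ρ (pre π ((k : ℕ) + 1)) - ρ (pre π (k : ℕ)) := by
  simp [gv]

lemma sum_pre_gv (ρ : Finset E → ℝ) (hnorm : ρ ∅ = 0) (π : Fin (Fintype.card E) ≃ E)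
    (k : ℕ) : ∑ e ∈ pre π k, gv ρ π e = ρ (pre π k) := by
  induction k with
  | zero => simp [pre_zero, hnorm]
  | succ k ih =>
    by_cases hk : k < Fintype.card E
    · rw [pre_succ hk, Finset.sum_insert (not_mem_pre hk), ih, gv_apply]
      rw [pre_succ hk]
      ring
    · rw [pre_succ_ge (le_of_not_gt hk), ih]

lemma gv_nonneg (ρ : Finset E → ℝ) (hmono : ∀ U V : Finset E, U ⊆ V → ρ U ≤ ρ V)
    (π : Fin (Fintype.card E) ≃ E) (e : E) : 0 ≤ gv ρ π e := by
  have := hmono _ _ (pre_mono (π := π)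
    (Nat.le_succ ((π.symm e : Fin (Fintype.card E)) : ℕ)))
  simp only [gv]
  linarith

lemma gv_sum_le (ρ : Finset E → ℝ)
    (hsub : ∀ U V : Finset E, ρ (U ∪ V) + ρ (U ∩ V) ≤ ρ U + ρ V)
    (hmono : ∀ U V : Finset E, U ⊆ V → ρ U ≤ ρ V) (hnorm : ρ ∅ = 0)
    (π : Fin (Fintype.card E) ≃ E) (U : Finset E) :
    ∑ e ∈ U, gv ρ π e ≤ ρ U := by
  induction U using Finset.strongInduction with
  | _ U ih =>
    rcases U.eq_empty_or_nonempty with rfl | hU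
    · simp [hnorm]
    · obtain ⟨e, heU, hemax⟩ := Finset.exists_max_image U
        (fun a => ((π.symm a : Fin (Fintype.card E)) : ℕ)) hU
      set k : ℕ := ((π.symm e : Fin (Fintype.card E)) : ℕ) with hkdef
      have hk : k < Fintype.card E := (π.symm e).isLt
      set P : Finset E := pre π k with hPdef
      have heP : e ∉ P := by
        simp [hPdef, mem_pre, hkdef]
      have hU'P : U.erase e ⊆ P := by
        intro a ha
        obtain ⟨hane, haU⟩ := Finset.mem_erase.mp ha
        have hle : ((π.symm a : Fin (Fintype.card E)) : ℕ) ≤ k := hemax a haU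
        rcases lt_or_eq_of_le hle with h | h
        · exact mem_pre.mpr h
        · exfalso
          apply hane
          have : π.symm a = π.symm e := Fin.ext (by rw [h])
          exact π.symm.injective this
      have hUP : U ∪ P = insert e P := by
        ext a
        simp only [Finset.mem_union, Finset.mem_insert]
        constructor
        · rintro (h | h)
          · by_cases hae : a = e
            · exact Or.inl hae
            · exact Or.inr (hU'P (Finset.mem_erase.mpr ⟨hae, h⟩))
          · exact Or.inr h
        · rintro (rfl | h)
          · exact Or.inl heU
          · exact Or.inr h
      have hUcap : U ∩ P = U.erase e := by
        ext a
        simp only [Finset.mem_inter, Finset.mem_erase]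
        constructor
        · rintro ⟨haU, haP⟩
          refine ⟨fun hae => ?_, haU⟩
          subst hae
          exact heP haP
        · rintro ⟨hane, haU⟩
          exact ⟨haU, hU'P (Finset.mem_erase.mpr ⟨hane, haU⟩)⟩
      have hsym : π ⟨k, hk⟩ = e := by
        have : π.symm e = ⟨k, hk⟩ := Fin.ext rfl
        rw [← this, Equiv.apply_symm_apply]
      have hins : pre π (k + 1) = insert e P := by
        rw [pre_succ hk, hsym]
      have hgve : gv ρ π e = ρ (insert e P) - ρ P := by
        rw [← hsym, gv_apply, hsym, hins]
      have hsubm := hsub U P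
      rw [hUP, hUcap] at hsubm
      have hih := ih (U.erase e) (Finset.erase_ssubset heU)
      have hsum : ∑ a ∈ U, gv ρ π a = gv ρ π e + ∑ a ∈ U.erase e, gv ρ π a :=
        (Finset.add_sum_erase U _ heU).symm
      rw [hsum, hgve]
      linarith

lemma gv_mem (ρ : Finset E → ℝ)
    (hsub : ∀ U V : Finset E, ρ (U ∪ V) + ρ (U ∩ V) ≤ ρ U + ρ V)
    (hmono : ∀ U V : Finset E, U ⊆ V → ρ U ≤ ρ V) (hnorm : ρ ∅ = 0)
    (π : Fin (Fintype.card E) ≃ E) : gv ρ π ∈ basePolytope ρ := by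
  refine ⟨gv_nonneg ρ hmono π, gv_sum_le ρ hsub hmono hnorm π, ?_⟩
  have := sum_pre_gv ρ hnorm π (Fintype.card E)
  rwa [pre_card] at this

lemma abel_le (n : ℕ) (c D : ℕ → ℝ) (hc : ∀ k, k + 1 < n → c (k + 1) ≤ c k)
    (hD : ∀ k, D k ≤ 0) (hD0 : D 0 = 0) (hDn : D n = 0) :
    ∑ k ∈ Finset.range n, c k * (D (k + 1) - D k) ≤ 0 := by
  rcases n with _ | m
  · simp
  have h1 : ∑ k ∈ Finset.range (m + 1), c k * (D (k + 1) - D k)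
      = ∑ k ∈ Finset.range (m + 1), c k * D (k + 1)
        - ∑ k ∈ Finset.range (m + 1), c k * D k := by
    rw [← Finset.sum_sub_distrib]
    congr 1
    funext k
    ring
  have h2 : ∑ k ∈ Finset.range (m + 1), c k * D (k + 1)
      = ∑ k ∈ Finset.range m, c k * D (k + 1) + c m * D (m + 1) :=
    Finset.sum_range_succ _ m
  have h3 : ∑ k ∈ Finset.range (m + 1), c k * D k
      = ∑ k ∈ Finset.range m, c (k + 1) * D (k + 1) + c 0 * D 0 :=
    Finset.sum_range_succ' _ m
  rw [h1, h2, h3, hD0, hDn]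
  have h4 : ∑ k ∈ Finset.range m, c k * D (k + 1)
      - ∑ k ∈ Finset.range m, c (k + 1) * D (k + 1)
      = ∑ k ∈ Finset.range m, (c k - c (k + 1)) * D (k + 1) := by
    rw [← Finset.sum_sub_distrib]
    congr 1
    funext k
    ring
  have h5 : ∑ k ∈ Finset.range m, (c k - c (k + 1)) * D (k + 1) ≤ 0 := by
    apply Finset.sum_nonpos
    intro k hk
    have hk' : k + 1 < m + 1 := by
      have := Finset.mem_range.mp hk; omega
    exact mul_nonpos_of_nonneg_of_nonpos (by linarith [hc k hk']) (hD (k + 1))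
  nlinarith [h4, h5]

lemma greedy_opt (ρ : Finset E → ℝ) (hnorm : ρ ∅ = 0) (π : Fin (Fintype.card E) ≃ E)
    (w : E → ℝ) (hw : ∀ k l : Fin (Fintype.card E), k ≤ l → w (π l) ≤ w (π k))
    {x : E → ℝ} (hx : x ∈ basePolytope ρ) :
    ∑ e, w e * x e ≤ ∑ e, w e * gv ρ π e := by
  set D : ℕ → ℝ := fun k => (∑ e ∈ pre π k, x e) - ρ (pre π k) with hDdef
  set c : ℕ → ℝ := fun k => if h : k < Fintype.card E then w (π ⟨k, h⟩) else 0 with hcdef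
  have key : ∑ e, w e * (x e - gv ρ π e)
      = ∑ k ∈ Finset.range (Fintype.card E), c k * (D (k + 1) - D k) := by
    rw [← Equiv.sum_comp π (fun e => w e * (x e - gv ρ π e))]
    rw [← Fin.sum_univ_eq_sum_range (fun k => c k * (D (k + 1) - D k)) (Fintype.card E)]
    apply Finset.sum_congr rfl
    intro k _
    have hk : (k : ℕ) < Fintype.card E := k.isLt
    have hins : pre π ((k : ℕ) + 1) = insert (π k) (pre π (k : ℕ)) := by
      rw [pre_succ hk]
    have hnm : π k ∉ pre π (k : ℕ) := by
      have := not_mem_pre (π := π) hk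
      simpa using this
    have hDk : D ((k : ℕ) + 1) - D (k : ℕ) = x (π k) - gv ρ π (π k) := by
      simp only [hDdef, gv_apply]
      rw [hins, Finset.sum_insert hnm]
      ring
    have hck : c (k : ℕ) = w (π k) := by
      simp only [hcdef, dif_pos hk]
    rw [hDk, hck]
  have habel : ∑ k ∈ Finset.range (Fintype.card E), c k * (D (k + 1) - D k) ≤ 0 := by
    apply abel_le
    · intro k hk1
      have hk : k < Fintype.card E := by omega
      simp only [hcdef, dif_pos hk1, dif_pos hk]
      exact hw ⟨k, hk⟩ ⟨k + 1, hk1⟩ (by simp [Fin.mk_le_mk])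
    · intro k
      simp only [hDdef]
      linarith [hx.2.1 (pre π k)]
    · simp [hDdef, pre_zero, hnorm]
    · simp only [hDdef]
      rw [pre_card]
      linarith [hx.2.2]
  have : ∑ e, w e * (x e - gv ρ π e)
      = ∑ e, w e * x e - ∑ e, w e * gv ρ π e := by
    rw [← Finset.sum_sub_distrib]
    congr 1
    funext e
    ring
  linarith [key, habel, this]

lemma convex_bp (ρ : Finset E → ℝ) : Convex ℝ (basePolytope ρ) := by
  rintro a ⟨ha0, ha1, ha2⟩ b ⟨hb0, hb1, hb2⟩ s t hs ht hst
  refine ⟨fun e => ?_, fun U => ?_, ?_⟩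
  · have : (s • a + t • b) e = s * a e + t * b e := rfl
    rw [this]
    exact add_nonneg (mul_nonneg hs (ha0 e)) (mul_nonneg ht (hb0 e))
  · have h : ∑ e ∈ U, (s • a + t • b) e = s * ∑ e ∈ U, a e + t * ∑ e ∈ U, b e := by
      rw [Finset.mul_sum, Finset.mul_sum, ← Finset.sum_add_distrib]
      rfl
    rw [h]
    calc s * ∑ e ∈ U, a e + t * ∑ e ∈ U, b e
        ≤ s * ρ U + t * ρ U := by
          gcongr <;> [exact ha1 U; exact hb1 U]
      _ = ρ U := by rw [← add_mul, hst, one_mul]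
  · have h : ∑ e, (s • a + t • b) e = s * ∑ e, a e + t * ∑ e, b e := by
      rw [Finset.mul_sum, Finset.mul_sum, ← Finset.sum_add_distrib]
      rfl
    rw [h, ha2, hb2, ← add_mul, hst, one_mul]

lemma hull_subset {α : Type*} [Fintype α] (g : α → (E → ℝ)) :
    convexHull ℝ (Set.range g) ⊆
      {x | ∃ μ : α → ℝ, (∀ p, 0 ≤ μ p) ∧ ∑ p, μ p = 1 ∧ ∑ p, μ p • g p = x} := by
  classical
  apply convexHull_min
  · rintro _ ⟨p, rfl⟩
    refine ⟨fun q => if q = p then 1 else 0, fun q => by positivity, by simp, by simp⟩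
  · rintro x ⟨μ, hμ0, hμ1, hμx⟩ y ⟨ν, hν0, hν1, hνy⟩ s t hs ht hst
    refine ⟨fun p => s * μ p + t * ν p,
      fun p => add_nonneg (mul_nonneg hs (hμ0 p)) (mul_nonneg ht (hν0 p)), ?_, ?_⟩
    · rw [Finset.sum_add_distrib, ← Finset.mul_sum, ← Finset.mul_sum, hμ1, hν1]
      simpa using hst
    · rw [← hμx, ← hνy]
      rw [Finset.smul_sum, Finset.smul_sum, ← Finset.sum_add_distrib]
      apply Finset.sum_congr rfl
      intro p _
      rw [add_smul, smul_smul, smul_smul]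

lemma mem_sum_sets {N : Type*} {S : N → Set (E → ℝ)} {t : Finset N} {x : E → ℝ} :
    x ∈ ∑ i ∈ t, S i ↔ ∃ g : N → (E → ℝ), (∀ i ∈ t, g i ∈ S i) ∧ ∑ i ∈ t, g i = x := by
  classical
  induction t using Finset.induction generalizing x with
  | empty =>
    simp only [Finset.sum_empty]
    constructor
    · intro h
      exact ⟨fun _ => 0, fun i hi => absurd hi (Finset.notMem_empty i), by
        simpa using h.symm⟩
    · rintro ⟨g, -, rfl⟩
      simp
  | @insert a s hi ih =>
    rw [Finset.sum_insert hi, Set.mem_add]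
    constructor
    · rintro ⟨y, hy, z, hz, rfl⟩
      obtain ⟨g, hg, hgsum⟩ := ih.mp hz
      refine ⟨Function.update g a y, ?_, ?_⟩
      · intro i hmem
        rcases Finset.mem_insert.mp hmem with rfl | hmem2
        · rwa [Function.update_self]
        · have hne : i ≠ a := by intro hh; subst hh; exact hi hmem2
          rw [Function.update_of_ne hne]
          exact hg i hmem2
      · rw [Finset.sum_insert hi, Function.update_self]
        congr 1
        rw [← hgsum]
        apply Finset.sum_congr rfl
        intro i hmem2
        have hne : i ≠ a := by intro hh; subst hh; exact hi hmem2
        rw [Function.update_of_ne hne]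
    · rintro ⟨g, hg, rfl⟩
      exact ⟨g a, hg a (Finset.mem_insert_self a s), ∑ i ∈ s, g i,
        ih.mpr ⟨g, fun i hmem => hg i (Finset.mem_insert_of_mem hmem), rfl⟩,
        (Finset.sum_insert hi).symm⟩

lemma mem_hull (ρ : Finset E → ℝ)
    (hsub : ∀ U V : Finset E, ρ (U ∪ V) + ρ (U ∩ V) ≤ ρ U + ρ V)
    (hmono : ∀ U V : Finset E, U ⊆ V → ρ U ≤ ρ V) (hnorm : ρ ∅ = 0)
    {x : E → ℝ} (hx : x ∈ basePolytope ρ) :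
    x ∈ convexHull ℝ (Set.range (gv ρ)) := by
  by_contra hcon
  have hfin : (Set.range (gv ρ)).Finite := Set.finite_range _
  obtain ⟨f, u, hfC, hfx⟩ := geometric_hahn_banach_closed_point
    (convex_convexHull ℝ _) (hfin.isClosed_convexHull (𝕜 := ℝ)) hcon
  set w : E → ℝ := fun e => f (fun j => if e = j then (1 : ℝ) else 0) with hwdef
  have hfw : ∀ y : E → ℝ, f y = ∑ e, y e * w e := by
    intro y
    conv_lhs => rw [pi_eq_sum_univ y]
    rw [map_sum]
    apply Finset.sum_congr rfl
    intro e _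
    rw [map_smul, smul_eq_mul]
  set n := Fintype.card E with hn
  set ε := Fintype.equivFin E with hε
  set σ := Tuple.sort (fun k => - w (ε.symm k)) with hσ
  set π : Fin n ≃ E := σ.trans ε.symm with hπ
  have hmon := Tuple.monotone_sort (fun k => - w (ε.symm k))
  have hwπ : ∀ k l : Fin n, k ≤ l → w (π l) ≤ w (π k) := by
    intro k l hkl
    have h := hmon hkl
    simp only [Function.comp_apply] at h
    have heq : ∀ j : Fin n, π j = ε.symm (σ j) := fun j => rfl
    rw [heq k, heq l]
    linarith
  have h1 : f x ≤ f (gv ρ π) := by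
    rw [hfw, hfw]
    have hgo := greedy_opt ρ hnorm π w hwπ hx
    calc ∑ e, x e * w e = ∑ e, w e * x e := by
          apply Finset.sum_congr rfl; intro e _; ring
      _ ≤ ∑ e, w e * gv ρ π e := hgo
      _ = ∑ e, gv ρ π e * w e := by
          apply Finset.sum_congr rfl; intro e _; ring
  have h2 : f (gv ρ π) < u :=
    hfC _ (subset_convexHull ℝ _ ⟨π, rfl⟩)
  linarith

end EdmondsSum

theorem stmt14 {E N : Type*} [Fintype E] [DecidableEq E] [Fintype N]
    (ρ : N → Finset E → ℝ)
    (hsub : ∀ i, ∀ U V : Finset E, ρ i (U ∪ V) + ρ i (U ∩ V) ≤ ρ i U + ρ i V)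
    (hmono : ∀ i, ∀ U V : Finset E, U ⊆ V → ρ i U ≤ ρ i V)
    (hnorm : ∀ i, ρ i ∅ = 0) :
    ∑ i : N, basePolytope (ρ i) = basePolytope (fun U => ∑ i : N, ρ i U) := by
  classical
  ext x
  rw [EdmondsSum.mem_sum_sets]
  constructor
  · rintro ⟨g, hg, rfl⟩
    refine ⟨fun e => ?_, fun U => ?_, ?_⟩
    · rw [Finset.sum_apply]
      exact Finset.sum_nonneg fun i _ => (hg i (Finset.mem_univ i)).1 e
    · calc ∑ e ∈ U, (∑ i : N, g i) e = ∑ e ∈ U, ∑ i : N, g i e := by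
            apply Finset.sum_congr rfl; intro e _; rw [Finset.sum_apply]
        _ = ∑ i : N, ∑ e ∈ U, g i e := Finset.sum_comm
        _ ≤ ∑ i : N, ρ i U := Finset.sum_le_sum fun i _ => (hg i (Finset.mem_univ i)).2.1 U
    · calc ∑ e, (∑ i : N, g i) e = ∑ e, ∑ i : N, g i e := by
            apply Finset.sum_congr rfl; intro e _; rw [Finset.sum_apply]
        _ = ∑ i : N, ∑ e, g i e := Finset.sum_comm
        _ = ∑ i : N, ρ i Finset.univ :=
            Finset.sum_congr rfl fun i _ => (hg i (Finset.mem_univ i)).2.2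
  · intro hx
    set ρt : Finset E → ℝ := fun U => ∑ i : N, ρ i U with hρt
    have hsubt : ∀ U V : Finset E, ρt (U ∪ V) + ρt (U ∩ V) ≤ ρt U + ρt V := by
      intro U V
      simp only [hρt, ← Finset.sum_add_distrib]
      exact Finset.sum_le_sum fun i _ => hsub i U V
    have hmont : ∀ U V : Finset E, U ⊆ V → ρt U ≤ ρt V := fun U V h =>
      Finset.sum_le_sum fun i _ => hmono i U V h
    have hnormt : ρt ∅ = 0 := by
      simp only [hρt]
      exact Finset.sum_eq_zero fun i _ => hnorm i
    have hxhull := EdmondsSum.mem_hull ρt hsubt hmont hnormt hx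
    obtain ⟨μ, hμ0, hμ1, hμx⟩ := EdmondsSum.hull_subset (EdmondsSum.gv ρt) hxhull
    refine ⟨fun i => ∑ p, μ p • EdmondsSum.gv (ρ i) p, fun i _ => ?_, ?_⟩
    · exact (EdmondsSum.convex_bp (ρ i)).sum_mem (fun p _ => hμ0 p) hμ1
        (fun p _ => EdmondsSum.gv_mem (ρ i) (hsub i) (hmono i) (hnorm i) p)
    · rw [Finset.sum_comm]
      rw [← hμx]
      apply Finset.sum_congr rfl
      intro p _
      rw [← Finset.smul_sum]
      congr 1
      funext e
      rw [Finset.sum_apply]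
      simp only [EdmondsSum.gv, hρt, Finset.sum_sub_distrib]
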